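/- The restriction of the channel decomposition S_c of a DAG G to the compressed transitive closure graph Q is a path decomposition of Q: each channel of S_c, with its channel order, forms a directed path in Q. -/

import Mathlib

/-- `v` is the earliest vertex of its channel (in channel order `cpos`, channels
given by `cidx`) reachable from `u` by a nontrivial directed path. -/
def Earliest {V : Type*} {k : ℕ} (E : V → V → Prop)
    (cidx : V → Fin k) (cpos : V → ℕ) (u v : V) : Prop :=
  Relation.TransGen E u v ∧
    ∀ w, cidx w = cidx v → Relation.TransGen E u w → cpos v ≤ cpos w

/-- Edge `(u,v)` of the compressed transitive closure graph `Q`: `v` is the earliest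
vertex of its channel reachable from `u`, and `u` is the latest vertex in the order
of its own channel with that property. -/
def QEdge {V : Type*} {k : ℕ} (E : V → V → Prop)
    (cidx : V → Fin k) (cpos : V → ℕ) (u v : V) : Prop :=
  Earliest E cidx cpos u v ∧
    ∀ u', cidx u' = cidx u → Earliest E cidx cpos u' v → cpos u' ≤ cpos u

/-- The restriction of the channel decomposition to the compressed
transitive closure graph `Q` is a path decomposition of `Q`: the channels, each read
in its channel order, form vertex-disjoint directed paths of `Q` partitioning `V`. -/
theorem stmt13 {V : Type*} [Fintype V] {k : ℕ} (E : V → V → Prop)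
    (cidx : V → Fin k) (cpos : V → ℕ)
    (hacyc : ∀ v, ¬ Relation.TransGen E v v)
    (hchan : ∀ a b, cidx a = cidx b → (cpos a < cpos b ↔ Relation.TransGen E a b))
    (hinj : ∀ a b, cidx a = cidx b → cpos a = cpos b → a = b)
    (hinit : ∀ v, ∀ j < cpos v, ∃ u, cidx u = cidx v ∧ cpos u = j) :
    ∃ S : Fin k → List V,
      (∀ v : V, ∃! p : Fin k × ℕ, (S p.1)[p.2]? = some v) ∧
      (∀ i, List.Chain' (QEdge E cidx cpos) (S i)) ∧
      (∀ i v, v ∈ S i → cidx v = i) ∧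
      (∀ v : V, (S (cidx v))[cpos v]? = some v) := by
  classical
  set n : Fin k → ℕ := fun i => (Finset.univ.filter fun v => cidx v = i).card with hn
  have key : ∀ (i : Fin k) (j : ℕ), (∃ v, cidx v = i ∧ cpos v = j) ↔ j < n i := by
    intro i j
    set C : Finset V := Finset.univ.filter fun v => cidx v = i with hC
    set T : Finset ℕ := C.image cpos with hT
    have hTcard : T.card = n i := by
      apply Finset.card_image_of_injOn
      intro a ha b hb hab
      have ha' := (Finset.mem_filter.mp ha).2
      have hb' := (Finset.mem_filter.mp hb).2
      exact hinj a b (ha'.trans hb'.symm) hab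
    have hmemT : ∀ m, m ∈ T ↔ ∃ v, cidx v = i ∧ cpos v = m := by
      intro m
      simp [hT, hC, Finset.mem_image, Finset.mem_filter, and_comm, eq_comm]
    have hdown : ∀ m m', m' < m → m ∈ T → m' ∈ T := by
      intro m m' hlt hm
      obtain ⟨v, hvi, hvm⟩ := (hmemT m).mp hm
      obtain ⟨u, hui, hum⟩ := hinit v m' (hvm ▸ hlt)
      exact (hmemT m').mpr ⟨u, hui.trans hvi, hum⟩
    have hsub : T ⊆ Finset.range (n i) := by
      intro m hm
      have hss : Finset.range (m + 1) ⊆ T := by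
        intro m' hm'
        rcases Nat.lt_succ_iff_lt_or_eq.mp (Finset.mem_range.mp hm') with h | h
        · exact hdown m m' h hm
        · exact h ▸ hm
      have := Finset.card_le_card hss
      rw [Finset.card_range, hTcard] at this
      exact Finset.mem_range.mpr this
    have hTeq : T = Finset.range (n i) := by
      apply Finset.eq_of_subset_of_card_le hsub
      rw [Finset.card_range, hTcard]
    rw [← hmemT, hTeq, Finset.mem_range]
  have pickex : ∀ (i : Fin k) (j : Fin (n i)), ∃ v, cidx v = i ∧ cpos v = (j : ℕ) :=
    fun i j => (key i j).mpr j.2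
  set pick : ∀ (i : Fin k), Fin (n i) → V :=
    fun i j => Classical.choose (pickex i j) with hpick
  have pickspec : ∀ (i : Fin k) (j : Fin (n i)),
      cidx (pick i j) = i ∧ cpos (pick i j) = (j : ℕ) :=
    fun i j => Classical.choose_spec (pickex i j)
  have pickuniq : ∀ (v : V) (i : Fin k) (j : Fin (n i)),
      cidx v = i → cpos v = (j : ℕ) → pick i j = v := by
    intro v i j h1 h2
    exact hinj _ _ (((pickspec i j).1).trans h1.symm) (((pickspec i j).2).trans h2.symm)
  have QE : ∀ u w, cidx u = cidx w → cpos w = cpos u + 1 → QEdge E cidx cpos u w := by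
    intro u w hcc hpw
    have huw : Relation.TransGen E u w := (hchan u w hcc).mp (by omega)
    refine ⟨⟨huw, ?_⟩, ?_⟩
    · intro x hx hux
      have := (hchan u x (hcc.trans hx.symm)).mpr hux
      omega
    · intro u' hu' heu'
      have := (hchan u' w (hu'.trans hcc)).mpr heu'.1
      omega
  refine ⟨fun i => List.ofFn (pick i), ?_, ?_, ?_, ?_⟩
  · intro v
    have hv : cpos v < n (cidx v) := (key (cidx v) (cpos v)).mp ⟨v, rfl, rfl⟩
    refine ⟨(cidx v, cpos v), ?_, ?_⟩
    · show (List.ofFn (pick (cidx v)))[cpos v]? = some v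
      have hlen : cpos v < (List.ofFn (pick (cidx v))).length := by
        simpa using hv
      rw [List.getElem?_eq_getElem hlen, List.getElem_ofFn]
      exact congrArg some (pickuniq v _ _ rfl rfl)
    · rintro ⟨i, m⟩ h
      have h : (List.ofFn (pick i))[m]? = some v := h
      have hm : m < (List.ofFn (pick i)).length := by
        by_contra hc
        rw [List.getElem?_eq_none (Nat.le_of_not_lt hc)] at h
        simp at h
      rw [List.getElem?_eq_getElem hm, List.getElem_ofFn] at h
      have hveq : pick i ⟨m, by simpa using hm⟩ = v := Option.some.inj h
      obtain ⟨h1, h2⟩ := pickspec i ⟨m, by simpa using hm⟩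
      rw [hveq] at h1 h2
      simp only at h2
      exact Prod.ext (by simp [← h1]) (by simp [← h2])
  · intro i
    rw [List.Chain', List.isChain_iff_getElem]
    intro m hm
    simp only [List.getElem_ofFn]
    apply QE
    · exact ((pickspec _ _).1).trans ((pickspec _ _).1).symm
    · rw [(pickspec i _).2, (pickspec i _).2]
  · intro i v hv
    obtain ⟨j, hj⟩ := (List.mem_ofFn).mp hv
    exact hj ▸ (pickspec i j).1
  · intro v
    have hv : cpos v < n (cidx v) := (key (cidx v) (cpos v)).mp ⟨v, rfl, rfl⟩
    have hlen : cpos v < (List.ofFn (pick (cidx v))).length := by simpa using hv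
    show (List.ofFn (pick (cidx v)))[cpos v]? = some v
    rw [List.getElem?_eq_getElem hlen, List.getElem_ofFn]
    exact congrArg some (pickuniq v _ _ rfl rfl)
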